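/- For n ≥ 2 and integers x, k with 0 ≤ x ≤ n and 0 ≤ k ≤ n-2, one has kr_{k+2}^{(n)}(x) - kr_k^{(n)}(x) = (-4x(n-x))/(n(n-1)) · kr_k^{(n-2)}(x-1), where the right-hand side is interpreted as 0 if x = 0 or x = n. -/
import Mathlib

open Finset

/-- The `k`-th Krawtchouk polynomial:
`kr n k x = (1/C(n,k)) * ∑_{j=0}^{k} (-1)^j C(x,j) C(n-x,k-j)`. -/
noncomputable def kr (n k x : ℕ) : ℝ :=
  (1 / (n.choose k : ℝ)) *
    ∑ j ∈ Finset.range (k + 1), (-1 : ℝ) ^ j * (x.choose j : ℝ) * ((n - x).choose (k - j) : ℝ)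

namespace KrAux

open Polynomial

noncomputable def PP (a b : ℕ) : ℝ[X] := (1 - X) ^ a * (1 + X) ^ b

lemma coeff_one_sub_X_pow (a k : ℕ) :
    ((1 - X : ℝ[X]) ^ a).coeff k = (-1 : ℝ) ^ k * (a.choose k : ℝ) := by
  have h1 : (1 - X : ℝ[X]) = C (-1) * (X + C (-1)) := by
    simp only [map_neg, map_one]
    ring
  rw [h1, mul_pow, ← C_pow, coeff_C_mul, coeff_X_add_C_pow]
  rcases le_or_gt k a with h | h
  · obtain ⟨d, rfl⟩ := Nat.exists_eq_add_of_le h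
    rw [Nat.add_sub_cancel_left, pow_add]
    have h2 : ((-1 : ℝ)) ^ d * (-1) ^ d = 1 := by
      rw [← mul_pow]; norm_num
    calc (-1 : ℝ) ^ k * (-1) ^ d * ((-1) ^ d * ((k + d).choose k : ℝ))
        = (-1 : ℝ) ^ k * ((k + d).choose k : ℝ) * ((-1) ^ d * (-1) ^ d) := by ring
      _ = (-1 : ℝ) ^ k * ((k + d).choose k : ℝ) := by rw [h2, mul_one]
  · simp [Nat.choose_eq_zero_of_lt h]

lemma PP_coeff (a b k : ℕ) :
    (PP a b).coeff k = ∑ j ∈ Finset.range (k + 1),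
      (-1 : ℝ) ^ j * (a.choose j : ℝ) * (b.choose (k - j) : ℝ) := by
  rw [PP, coeff_mul, Finset.Nat.sum_antidiagonal_eq_sum_range_succ_mk]
  refine Finset.sum_congr rfl fun j _ => ?_
  rw [coeff_one_sub_X_pow, coeff_one_add_X_pow, mul_assoc]

lemma deriv_eq (a b : ℕ) :
    (1 - X ^ 2) * derivative (PP a b) =
      (C ((b : ℝ) - (a : ℝ)) - C ((a : ℝ) + (b : ℝ)) * X) * PP a b := by
  have hd1 : derivative (1 - X : ℝ[X]) = -1 := by
    simp
  have hd2 : derivative (1 + X : ℝ[X]) = 1 := by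
    simp
  rcases a with _ | a <;> rcases b with _ | b <;>
    simp only [PP, derivative_mul, derivative_pow, hd1, hd2, derivative_one, pow_zero,
      Nat.add_sub_cancel, Nat.cast_add, Nat.cast_one, Nat.cast_zero, Nat.cast_ofNat,
      map_add, map_sub, map_one, map_zero, C_eq_natCast] <;>
    push_cast <;> ring

lemma PP_succ (a b : ℕ) : PP (a + 1) (b + 1) = (1 - X ^ 2) * PP a b := by
  rw [PP, PP, pow_succ, pow_succ]; ring

lemma rec_zero (a b : ℕ) :
    (PP a b).coeff 1 = ((b : ℝ) - (a : ℝ)) * (PP a b).coeff 0 := by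
  have h := congrArg (fun P : ℝ[X] => P.coeff 0) (deriv_eq a b)
  simp only [mul_coeff_zero, coeff_sub, coeff_one, coeff_derivative, coeff_C,
    coeff_mul_X_pow'] at h
  simp only [coeff_X_pow] at h
  norm_num at h
  linarith [h]

lemma rec_k (a b k : ℕ) :
    ((k : ℝ) + 2) * (PP a b).coeff (k + 2) =
      ((b : ℝ) - (a : ℝ)) * (PP a b).coeff (k + 1) +
        ((k : ℝ) - ((a : ℝ) + (b : ℝ))) * (PP a b).coeff k := by
  have h := congrArg (fun P : ℝ[X] => P.coeff (k + 1)) (deriv_eq a b)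
  simp only [sub_mul, one_mul, coeff_sub, mul_assoc] at h
  rw [coeff_X_pow_mul'] at h
  rw [coeff_C_mul, coeff_C_mul, coeff_X_mul] at h
  rcases k with _ | k
  · norm_num [coeff_derivative] at h
    push_cast
    linear_combination h
  · rw [if_pos (by omega : 2 ≤ k + 1 + 1)] at h
    have hi : k + 1 + 1 - 2 = k := by omega
    rw [hi, coeff_derivative, coeff_derivative] at h
    push_cast at h ⊢
    linear_combination h

lemma shift_k (a b k : ℕ) :
    (PP (a + 1) (b + 1)).coeff (k + 2) = (PP a b).coeff (k + 2) - (PP a b).coeff k := by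
  rw [PP_succ, sub_mul, one_mul, coeff_sub, coeff_X_pow_mul]

lemma shift_zero (a b : ℕ) : (PP (a + 1) (b + 1)).coeff 0 = (PP a b).coeff 0 := by
  rw [PP_succ, sub_mul, one_mul, coeff_sub, coeff_X_pow_mul']
  norm_num

lemma shift_one (a b : ℕ) : (PP (a + 1) (b + 1)).coeff 1 = (PP a b).coeff 1 := by
  rw [PP_succ, sub_mul, one_mul, coeff_sub, coeff_X_pow_mul']
  norm_num

lemma key (y z k : ℕ) :
    ((k : ℝ) + 1) * ((k : ℝ) + 2) * (PP (y + 1) (z + 1)).coeff (k + 2) -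
        (((y : ℝ) + z + 2) - k) * (((y : ℝ) + z + 2) - k - 1) *
          (PP (y + 1) (z + 1)).coeff k =
      -(4 * ((y : ℝ) + 1) * ((z : ℝ) + 1)) * (PP y z).coeff k := by
  set N : ℝ := (y : ℝ) + z + 2 with hN
  set c : ℝ := (z : ℝ) - y with hc
  set s : ℝ := 4 * ((y : ℝ) + 1) * ((z : ℝ) + 1) with hs
  rcases k with _ | _ | _ | k
  · have hA1 := rec_zero (y + 1) (z + 1)
    have hA2 := rec_k (y + 1) (z + 1) 0
    have hA3 := shift_zero y z
    push_cast at hA1 hA2 ⊢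
    norm_num at hA2 ⊢
    linear_combination hA2 + c * hA1 - s * hA3
  · have hA1 := rec_zero (y + 1) (z + 1)
    have hA2 := rec_k (y + 1) (z + 1) 0
    have hA4 := rec_k (y + 1) (z + 1) 1
    have hA5 := shift_one y z
    push_cast at hA1 hA2 hA4 ⊢
    norm_num at hA2 hA4 ⊢
    linear_combination 2 * hA4 + c * hA2 + N * hA1 - s * hA5
  · have hA4 := rec_k (y + 1) (z + 1) 1
    have hA6 := rec_k (y + 1) (z + 1) 2
    have hA7 := shift_k y z 0
    have hB1 := rec_k y z 0
    have hA5 := shift_one y z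
    have hB2 := rec_zero y z
    push_cast at hA4 hA6 hB1 hB2 ⊢
    norm_num at hA4 hA6 hA7 hB1 ⊢
    linear_combination 3 * hA6 + c * hA4 + (2 * N - s) * hA7 + N * hB1 +
      c * (1 - N) * hA5 + c * hB2
  · have hF1 := rec_k (y + 1) (z + 1) (k + 3)
    have hF2 := rec_k (y + 1) (z + 1) (k + 2)
    have hF3 := shift_k y z (k + 1)
    have hF4 := shift_k y z k
    have hF5 := rec_k y z (k + 1)
    have hF6 := rec_k y z k
    push_cast at hF1 hF2 hF5 hF6 ⊢
    norm_num at hF1 hF2 hF3 hF5 ⊢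
    linear_combination ((k : ℝ) + 4) * hF1 + c * hF2 + (N * ((k : ℝ) + 3) - s) * hF3 +
      c * ((k : ℝ) + 2 - N) * hF4 + N * hF5 + c * hF6

lemma kr_eq_P (y z m : ℕ) :
    kr (y + z + 2) m (y + 1) =
      (1 / ((y + z + 2).choose m : ℝ)) * (PP (y + 1) (z + 1)).coeff m := by
  rw [kr, PP_coeff, show y + z + 2 - (y + 1) = z + 1 by omega]

lemma kr_eq_Q (y z m : ℕ) :
    kr (y + z) m y = (1 / ((y + z).choose m : ℝ)) * (PP y z).coeff m := by
  rw [kr, PP_coeff, show y + z - y = z by omega]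

end KrAux

/-- Difference formula in `k` for Krawtchouk polynomials: for `n ≥ 2`, `0 ≤ x ≤ n`,
`0 ≤ k ≤ n - 2`,
`kr_{k+2}^{(n)}(x) - kr_k^{(n)}(x) = (-4x(n-x))/(n(n-1)) · kr_k^{(n-2)}(x-1)`,
where the right-hand side vanishes when `x = 0` or `x = n` (the factor `x(n-x)` is zero). -/
theorem krawtchouk_diff (n x k : ℕ) (hn : 2 ≤ n) (hx : x ≤ n) (hk : k ≤ n - 2) :
    kr n (k + 2) x - kr n k x =
      (-4 * (x : ℝ) * ((n : ℝ) - (x : ℝ))) / ((n : ℝ) * ((n : ℝ) - 1)) *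
        kr (n - 2) k (x - 1) := by
  rcases Nat.eq_zero_or_pos x with rfl | hx1
  · -- x = 0
    have h1 : ∀ m, m ≤ n → kr n m 0 = 1 := by
      intro m hm
      rw [kr, Finset.sum_eq_single 0]
      · simp [Nat.choose_pos hm, (Nat.choose_pos hm).ne']
      · intro j hj hj0
        rcases j with _ | j
        · exact absurd rfl hj0
        · simp
      · intro h
        exact absurd (Finset.mem_range.2 (by omega)) h
    rw [h1 (k + 2) (by omega), h1 k (by omega)]
    simp
  rcases eq_or_lt_of_le hx with rfl | hxn
  · -- x = n
    have h1 : ∀ m, m ≤ x → kr x m x = (-1 : ℝ) ^ m := by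
      intro m hm
      rw [kr, Finset.sum_eq_single m]
      · have hC : (x.choose m : ℝ) ≠ 0 := Nat.cast_ne_zero.2 (Nat.choose_pos hm).ne'
        simp only [Nat.sub_self, Nat.choose_self, Nat.cast_one, mul_one, one_div,
          Nat.choose_zero_right]
        field_simp
      · intro j hj hjm
        have hjm' : j < m := by
          have := Finset.mem_range.1 hj; omega
        simp [Nat.sub_self, Nat.choose_eq_zero_of_lt (by omega : 0 < m - j)]
      · intro h
        exact absurd (Finset.mem_range.2 (by omega)) h
    rw [h1 (k + 2) (by omega), h1 k (by omega)]
    rw [pow_add]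
    norm_num
  · -- main case : 1 ≤ x < n
    obtain ⟨y, rfl⟩ : ∃ y, x = y + 1 := ⟨x - 1, by omega⟩
    obtain ⟨z, rfl⟩ : ∃ z, n = y + z + 2 := ⟨n - y - 2, by omega⟩
    obtain ⟨w, hw⟩ : ∃ w, y + z = k + w := ⟨y + z - k, by omega⟩
    have hsub1 : y + z + 2 - 2 = y + z := by omega
    have hsub2 : y + 1 - 1 = y := by omega
    rw [hsub1, hsub2, KrAux.kr_eq_P, KrAux.kr_eq_P, KrAux.kr_eq_Q]
    -- choose identities
    have e1 : (y + z + 2).choose (k + 1) * (k + 1) = (y + z + 2).choose k * (w + 2) := by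
      have h := Nat.choose_succ_right_eq (y + z + 2) k
      rwa [show y + z + 2 - k = w + 2 by omega] at h
    have e2 : (y + z + 2).choose (k + 2) * (k + 2) = (y + z + 2).choose (k + 1) * (w + 1) := by
      have h := Nat.choose_succ_right_eq (y + z + 2) (k + 1)
      rwa [show y + z + 2 - (k + 1) = w + 1 by omega] at h
    have hcc1 : (y + z + 2).choose k * ((w + 2) * (w + 1)) =
        (y + z + 2).choose (k + 2) * ((k + 1) * (k + 2)) := by
      calc (y + z + 2).choose k * ((w + 2) * (w + 1))
          = ((y + z + 2).choose k * (w + 2)) * (w + 1) := by ring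
        _ = ((y + z + 2).choose (k + 1) * (k + 1)) * (w + 1) := by rw [e1]
        _ = ((y + z + 2).choose (k + 1) * (w + 1)) * (k + 1) := by ring
        _ = ((y + z + 2).choose (k + 2) * (k + 2)) * (k + 1) := by rw [e2]
        _ = (y + z + 2).choose (k + 2) * ((k + 1) * (k + 2)) := by ring
    have f1 : (y + z + 1) * (y + z).choose k = (y + z + 1).choose (k + 1) * (k + 1) := by
      have := Nat.add_one_mul_choose_eq (y + z) k
      simpa [Nat.succ_eq_add_one] using this
    have f2 : (y + z + 2) * (y + z + 1).choose (k + 1) =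
        (y + z + 2).choose (k + 2) * (k + 2) := by
      have := Nat.add_one_mul_choose_eq (y + z + 1) (k + 1)
      simpa [Nat.succ_eq_add_one] using this
    have hcc2 : (y + z + 2) * ((y + z + 1) * (y + z).choose k) =
        (y + z + 2).choose (k + 2) * ((k + 1) * (k + 2)) := by
      calc (y + z + 2) * ((y + z + 1) * (y + z).choose k)
          = (y + z + 2) * ((y + z + 1).choose (k + 1) * (k + 1)) := by rw [f1]
        _ = ((y + z + 2) * (y + z + 1).choose (k + 1)) * (k + 1) := by ring
        _ = ((y + z + 2).choose (k + 2) * (k + 2)) * (k + 1) := by rw [f2]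
        _ = (y + z + 2).choose (k + 2) * ((k + 1) * (k + 2)) := by ring
    have hcc1R : ((y + z + 2).choose k : ℝ) * ((w + 2) * (w + 1)) =
        ((y + z + 2).choose (k + 2) : ℝ) * ((k + 1) * (k + 2)) := by
      exact_mod_cast congrArg (fun t : ℕ => (t : ℝ)) hcc1
    have hcc2R : ((y : ℝ) + z + 2) * (((y : ℝ) + z + 1) * ((y + z).choose k : ℝ)) =
        ((y + z + 2).choose (k + 2) : ℝ) * (((k : ℝ) + 1) * ((k : ℝ) + 2)) := by
      exact_mod_cast congrArg (fun t : ℕ => (t : ℝ)) hcc2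
    have hwR : (y : ℝ) + z = (k : ℝ) + w := by exact_mod_cast congrArg (fun t : ℕ => (t : ℝ)) hw
    have hkey := KrAux.key y z k
    have hD2 : ((y + z + 2).choose (k + 2) : ℝ) ≠ 0 :=
      Nat.cast_ne_zero.2 (Nat.choose_pos (by omega)).ne'
    have hD0 : ((y + z + 2).choose k : ℝ) ≠ 0 :=
      Nat.cast_ne_zero.2 (Nat.choose_pos (by omega)).ne'
    have hDg : ((y + z).choose k : ℝ) ≠ 0 :=
      Nat.cast_ne_zero.2 (Nat.choose_pos (by omega)).ne'
    have hNne : ((y : ℝ) + z + 2) ≠ 0 := by positivity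
    have hN1ne : ((y : ℝ) + z + 2) - 1 ≠ 0 := by
      have : ((y : ℝ) + z + 2) - 1 = (y : ℝ) + z + 1 := by ring
      rw [this]; positivity
    push_cast
    field_simp
    linear_combination
      (((y + z + 2).choose (k + 2) : ℝ) * ((y + z + 2).choose k : ℝ)) * hkey +
      ((KrAux.PP (y + 1) (z + 1)).coeff (k + 2) * ((y + z + 2).choose k : ℝ) -
        ((y + z + 2).choose (k + 2) : ℝ) * (KrAux.PP (y + 1) (z + 1)).coeff k) * hcc2R +
      (((y + z + 2).choose (k + 2) : ℝ) * (KrAux.PP (y + 1) (z + 1)).coeff k) * hcc1R +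
      (((y + z + 2).choose (k + 2) : ℝ) * (KrAux.PP (y + 1) (z + 1)).coeff k *
        ((y + z + 2).choose k : ℝ) * ((y : ℝ) + z - k + w + 3)) * hwR
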